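/- For every n ≥ 1 and every unitary matrix U ∈ M_{2^n}(ℂ), there exist an integer r with r ≤ 2^{n−1}(2^n − 1) and matrices U_1, …, U_r ∈ M_{2^n}(ℂ), each of which is a controlled single-qubit gate on n qubits with k controls for some k ∈ {0, 1, …, n−1}, such that U = U_1 · U_2 ⋯ U_r. -/

import Mathlib

open Matrix

/-- The Kronecker product `V_n ⊗ ⋯ ⊗ V_1` of `n` two-by-two complex matrices,
as a `2^n × 2^n` matrix; the factor `V i` acts on the `(i+1)`-st qubit
(the low-order bit of the index corresponds to `V 0`, i.e. to `V_1`). -/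
noncomputable def kronPow (n : ℕ) (V : Fin n → Matrix (Fin 2) (Fin 2) ℂ) :
    Matrix (Fin (2 ^ n)) (Fin (2 ^ n)) ℂ :=
  Matrix.of fun x y =>
    ∏ i : Fin n, V i (finFunctionFinEquiv.symm x i) (finFunctionFinEquiv.symm y i)

/-- The diagonal matrix unit `diag(1,0)`. -/
def E00 : Matrix (Fin 2) (Fin 2) ℂ := !![1, 0; 0, 0]

/-- The diagonal matrix unit `diag(0,1)`. -/
def E11 : Matrix (Fin 2) (Fin 2) ℂ := !![0, 0; 0, 1]

/-- A controlled single-qubit gate on `n` qubits with `k` controls: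
a matrix of the form `I + V_n ⊗ ⋯ ⊗ V_1` where exactly one factor equals
`W - I` for a unitary `W ∈ M_2(ℂ)`, exactly `k` of the remaining factors
belong to `{E00, E11}`, and all other factors equal `I_2`. -/
noncomputable def IsControlledGate (n k : ℕ)
    (U : Matrix (Fin (2 ^ n)) (Fin (2 ^ n)) ℂ) : Prop :=
  ∃ (V : Fin n → Matrix (Fin 2) (Fin 2) ℂ) (i : Fin n)
    (W : Matrix (Fin 2) (Fin 2) ℂ),
      W ∈ Matrix.unitaryGroup (Fin 2) ℂ ∧
      V i = W - 1 ∧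
      (∀ j, j ≠ i → V j = E00 ∨ V j = E11 ∨ V j = 1) ∧
      {j : Fin n | j ≠ i ∧ (V j = E00 ∨ V j = E11)}.ncard = k ∧
      U = 1 + kronPow n V

section TL
variable {ι : Type*} [DecidableEq ι] [Fintype ι]

/-- Two-level matrix: identity except a 2×2 block `W` on rows/cols `a,b`. -/
def TL (a b : ι) (W : Matrix (Fin 2) (Fin 2) ℂ) : Matrix ι ι ℂ :=
  Matrix.of fun x y =>
    if x = a then (if y = a then W 0 0 else if y = b then W 0 1 else 0)
    else if x = b then (if y = a then W 1 0 else if y = b then W 1 1 else 0)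
    else if x = y then 1 else 0

omit [Fintype ι]

lemma TL_aa (a b : ι) (W : Matrix (Fin 2) (Fin 2) ℂ) : TL a b W a a = W 0 0 := by simp [TL]
lemma TL_ab {a b : ι} (hab : a ≠ b) (W : Matrix (Fin 2) (Fin 2) ℂ) : TL a b W a b = W 0 1 := by
  simp [TL, hab.symm]
lemma TL_ba {a b : ι} (hab : a ≠ b) (W : Matrix (Fin 2) (Fin 2) ℂ) : TL a b W b a = W 1 0 := by
  simp [TL, hab.symm]
lemma TL_bb {a b : ι} (hab : a ≠ b) (W : Matrix (Fin 2) (Fin 2) ℂ) : TL a b W b b = W 1 1 := by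
  simp [TL, hab.symm]
lemma TL_a_other {a b y : ι} (hya : y ≠ a) (hyb : y ≠ b) (W : Matrix (Fin 2) (Fin 2) ℂ) :
    TL a b W a y = 0 := by simp [TL, hya, hyb]
lemma TL_b_other {a b y : ι} (hab : a ≠ b) (hya : y ≠ a) (hyb : y ≠ b)
    (W : Matrix (Fin 2) (Fin 2) ℂ) : TL a b W b y = 0 := by
  simp [TL, hab.symm, hya, hyb]
lemma TL_other {a b x : ι} (hxa : x ≠ a) (hxb : x ≠ b) (W : Matrix (Fin 2) (Fin 2) ℂ)
    (y : ι) : TL a b W x y = if x = y then 1 else 0 := by simp [TL, hxa, hxb]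

variable [Fintype ι]

lemma sum_pair_support {M : Type*} [AddCommMonoid M] {a b : ι} (hab : a ≠ b) (f : ι → M)
    (hf : ∀ k, k ≠ a → k ≠ b → f k = 0) : ∑ k, f k = f a + f b := by
  rw [← Finset.sum_subset (Finset.subset_univ {a, b}) (fun x _ hx => by
    simp only [Finset.mem_insert, Finset.mem_singleton, not_or] at hx
    exact hf x hx.1 hx.2)]
  rw [Finset.sum_pair hab]

lemma TL_mul {a b : ι} (hab : a ≠ b) (W W' : Matrix (Fin 2) (Fin 2) ℂ) :
    TL a b W * TL a b W' = TL a b (W * W') := by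
  have hW2 : ∀ (p q : Fin 2), (W * W') p q = W p 0 * W' 0 q + W p 1 * W' 1 q := by
    intro p q; rw [Matrix.mul_apply, Fin.sum_univ_two]
  ext x y
  rw [Matrix.mul_apply]
  rcases eq_or_ne x a with hxa | hxa
  · rw [hxa,
      sum_pair_support hab (fun k => TL a b W a k * TL a b W' k y)
        (fun k hka hkb => by simp only [TL_a_other hka hkb, zero_mul]),
      TL_aa, TL_ab hab]
    rcases eq_or_ne y a with hya | hya
    · rw [hya, TL_aa, TL_ba hab, TL_aa, hW2]
    · rcases eq_or_ne y b with hyb | hyb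
      · rw [hyb, TL_ab hab, TL_bb hab, TL_ab hab, hW2]
      · rw [TL_a_other hya hyb, TL_b_other hab hya hyb, TL_a_other hya hyb]; ring
  · rcases eq_or_ne x b with hxb | hxb
    · rw [hxb,
        sum_pair_support hab (fun k => TL a b W b k * TL a b W' k y)
          (fun k hka hkb => by simp only [TL_b_other hab hka hkb, zero_mul]),
        TL_ba hab, TL_bb hab]
      rcases eq_or_ne y a with hya | hya
      · rw [hya, TL_aa, TL_ba hab, TL_ba hab, hW2]
      · rcases eq_or_ne y b with hyb | hyb
        · rw [hyb, TL_ab hab, TL_bb hab, TL_bb hab, hW2]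
        · rw [TL_a_other hya hyb, TL_b_other hab hya hyb, TL_b_other hab hya hyb]; ring
    · have h1 : ∀ k, TL a b W x k * TL a b W' k y
          = if x = k then TL a b W' k y else 0 := by
        intro k; rw [TL_other hxa hxb]; split <;> simp
      simp only [h1]
      rw [Finset.sum_ite_eq Finset.univ x (fun k => TL a b W' k y)]
      simp only [Finset.mem_univ, if_true]
      rw [TL_other hxa hxb, TL_other hxa hxb]

lemma TL_one {a b : ι} (hab : a ≠ b) : TL a b (1 : Matrix (Fin 2) (Fin 2) ℂ) = 1 := by
  ext x y
  rw [Matrix.one_apply]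
  rcases eq_or_ne x a with hxa | hxa
  · rw [hxa]
    rcases eq_or_ne y a with hya | hya
    · rw [hya, TL_aa]; simp
    · rcases eq_or_ne y b with hyb | hyb
      · rw [hyb, TL_ab hab]; simp [hab]
      · rw [TL_a_other hya hyb]; simp [hya, hyb, Ne.symm hya, Ne.symm hyb]
  · rcases eq_or_ne x b with hxb | hxb
    · rw [hxb]
      rcases eq_or_ne y a with hya | hya
      · rw [hya, TL_ba hab]; simp [hab.symm]
      · rcases eq_or_ne y b with hyb | hyb
        · rw [hyb, TL_bb hab]; simp
        · rw [TL_b_other hab hya hyb]; simp [hya, hyb, Ne.symm hya, Ne.symm hyb]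
    · rw [TL_other hxa hxb]

lemma TL_star {a b : ι} (hab : a ≠ b) (W : Matrix (Fin 2) (Fin 2) ℂ) :
    star (TL a b W) = TL a b (star W) := by
  have hsW : ∀ p q : Fin 2, (star W : Matrix (Fin 2) (Fin 2) ℂ) p q = star (W q p) :=
    fun p q => rfl
  ext x y
  rw [Matrix.star_eq_conjTranspose, Matrix.conjTranspose_apply]
  rcases eq_or_ne x a with hxa | hxa
  · rw [hxa]
    rcases eq_or_ne y a with hya | hya
    · rw [hya, TL_aa, TL_aa, hsW]
    · rcases eq_or_ne y b with hyb | hyb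
      · rw [hyb, TL_ba hab, TL_ab hab, hsW]
      · rw [TL_other hya hyb, TL_a_other hya hyb]
        simp [hya, hyb, Ne.symm hya, Ne.symm hyb]
  · rcases eq_or_ne x b with hxb | hxb
    · rw [hxb]
      rcases eq_or_ne y a with hya | hya
      · rw [hya, TL_ab hab, TL_ba hab, hsW]
      · rcases eq_or_ne y b with hyb | hyb
        · rw [hyb, TL_bb hab, TL_bb hab, hsW]
        · rw [TL_other hya hyb, TL_b_other hab hya hyb]
          simp [hya, hyb, Ne.symm hya, Ne.symm hyb]
    · rw [TL_other hxa hxb]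
      rcases eq_or_ne y a with hya | hya
      · rw [hya, TL_a_other hxa hxb]; simp [hxa]
      · rcases eq_or_ne y b with hyb | hyb
        · rw [hyb, TL_b_other hab hxa hxb]; simp [hxb]
        · rw [TL_other hya hyb]
          rcases eq_or_ne x y with h | h
          · rw [h]; simp
          · simp [h, Ne.symm h]

lemma TL_mem_unitary {a b : ι} (hab : a ≠ b) {W : Matrix (Fin 2) (Fin 2) ℂ}
    (hW : W ∈ Matrix.unitaryGroup (Fin 2) ℂ) :
    TL a b W ∈ Matrix.unitaryGroup ι ℂ := by
  rw [Matrix.mem_unitaryGroup_iff]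
  rw [TL_star hab, TL_mul hab, (Matrix.mem_unitaryGroup_iff).mp hW, TL_one hab]

end TL

lemma exists_rot (p q : ℂ) :
    ∃ W : Matrix (Fin 2) (Fin 2) ℂ, W ∈ Matrix.unitaryGroup (Fin 2) ℂ ∧
      W 1 0 * p + W 1 1 * q = 0 ∧
      (star p * p + star q * q = 1 → W 0 0 * p + W 0 1 * q = 1) := by
  have hstar : ∀ z : ℂ, star z * z = (Complex.normSq z : ℂ) := by
    intro z; rw [Complex.normSq_eq_conj_mul_self]; rfl
  by_cases h0 : p = 0 ∧ q = 0
  · refine ⟨1, Submonoid.one_mem _, ?_, ?_⟩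
    · simp [h0.1, h0.2, Matrix.one_apply]
    · intro h; rw [h0.1, h0.2] at h; simp at h
  · set r : ℝ := Real.sqrt (Complex.normSq p + Complex.normSq q) with hr
    have hpos : 0 < Complex.normSq p + Complex.normSq q := by
      rcases not_and_or.mp h0 with h | h
      · have := Complex.normSq_pos.mpr h
        nlinarith [Complex.normSq_nonneg q]
      · have := Complex.normSq_pos.mpr h
        nlinarith [Complex.normSq_nonneg p]
    have hrpos : 0 < r := Real.sqrt_pos.mpr hpos
    have hrr : (r : ℝ) * r = Complex.normSq p + Complex.normSq q :=
      Real.mul_self_sqrt hpos.le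
    set c : ℂ := (r : ℂ) with hc
    have hcne : c ≠ 0 := by
      simp only [hc, ne_eq, Complex.ofReal_eq_zero]
      exact hrpos.ne'
    have hcc : c * c = starRingEnd ℂ p * p + starRingEnd ℂ q * q := by
      have h1 := hstar p
      have h2 := hstar q
      rw [Complex.star_def] at h1 h2
      rw [hc, ← Complex.ofReal_mul, hrr]
      push_cast
      rw [h1, h2]
    have hcconj : starRingEnd ℂ c = c := by rw [hc]; exact Complex.conj_ofReal r
    have hcc' : c * c ≠ 0 := mul_ne_zero hcne hcne
    refine ⟨!![starRingEnd ℂ p / c, starRingEnd ℂ q / c; -q / c, p / c], ?_, ?_, ?_⟩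
    · rw [Matrix.mem_unitaryGroup_iff]
      ext i j
      fin_cases i <;> fin_cases j <;>
        simp only [Matrix.mul_apply, Fin.sum_univ_two, Matrix.star_apply, Matrix.one_apply,
          Complex.star_def, Matrix.cons_val', Matrix.cons_val_zero, Matrix.cons_val_one,
          Matrix.head_cons, Matrix.empty_val', Matrix.cons_val_fin_one, Matrix.head_fin_const,
          map_div₀, map_neg, hcconj, Complex.conj_conj, Fin.zero_eta, Fin.mk_one,
          Matrix.of_apply, ne_eq, zero_ne_one, one_ne_zero, if_true, if_false,
          ite_true, ite_false] <;>
        rw [div_mul_div_comm, div_mul_div_comm, ← add_div] <;>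
        [rw [div_eq_one_iff_eq hcc']; rw [div_eq_zero_iff]; rw [div_eq_zero_iff];
          rw [div_eq_one_iff_eq hcc']]
      · linear_combination -hcc
      · left; ring
      · left; ring
      · linear_combination -hcc
    · have e10 : !![starRingEnd ℂ p / c, starRingEnd ℂ q / c; -q / c, p / c] 1 0 = -q / c := by
        simp
      have e11 : !![starRingEnd ℂ p / c, starRingEnd ℂ q / c; -q / c, p / c] 1 1 = p / c := by
        simp
      rw [e10, e11]
      field_simp
      ring
    · intro h
      have e00 : !![starRingEnd ℂ p / c, starRingEnd ℂ q / c; -q / c, p / c] 0 0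
          = starRingEnd ℂ p / c := by simp
      have e01 : !![starRingEnd ℂ p / c, starRingEnd ℂ q / c; -q / c, p / c] 0 1
          = starRingEnd ℂ q / c := by simp
      rw [e00, e01]
      have h' : starRingEnd ℂ p * p + starRingEnd ℂ q * q = 1 := by
        rw [← h]; rfl
      have h1 : c * c = 1 := by rw [hcc, h']
      have hc1 : c = 1 := by
        have h2 : (r : ℝ) * r = 1 := by
          have h3 := h1
          rw [hc, ← Complex.ofReal_mul] at h3
          exact_mod_cast h3
        have h4 : r = 1 := by nlinarith
        rw [hc, h4, Complex.ofReal_one]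
      rw [hc1]
      rw [div_one, div_one, h']

/-- Unitary matrices preserve the (complex form of the) squared norm of a vector. -/
lemma unitary_norm_preserved {ι : Type*} [Fintype ι] [DecidableEq ι]
    {M : Matrix ι ι ℂ} (hM : M ∈ Matrix.unitaryGroup ι ℂ) (v : ι → ℂ) :
    ∑ x, star ((M *ᵥ v) x) * (M *ᵥ v) x = ∑ x, star (v x) * v x := by
  have h1 : ∑ x, star ((M *ᵥ v) x) * (M *ᵥ v) x
      = dotProduct (star (M *ᵥ v)) (M *ᵥ v) := rfl
  have h2 : ∑ x, star (v x) * v x = dotProduct (star v) v := rfl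
  rw [h1, h2, Matrix.star_mulVec, dotProduct_mulVec, Matrix.vecMul_vecMul,
    ← Matrix.star_eq_conjTranspose, (Matrix.mem_unitaryGroup_iff').mp hM, Matrix.vecMul_one]

section CC
variable {ι : Type*} [DecidableEq ι] [Fintype ι]

lemma TL_mulVec_a {a b : ι} (hab : a ≠ b) (W : Matrix (Fin 2) (Fin 2) ℂ) (v : ι → ℂ) :
    (TL a b W *ᵥ v) a = W 0 0 * v a + W 0 1 * v b := by
  show ∑ k, TL a b W a k * v k = _
  rw [sum_pair_support hab _ (fun k hka hkb => by rw [TL_a_other hka hkb]; ring),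
    TL_aa, TL_ab hab]

lemma TL_mulVec_b {a b : ι} (hab : a ≠ b) (W : Matrix (Fin 2) (Fin 2) ℂ) (v : ι → ℂ) :
    (TL a b W *ᵥ v) b = W 1 0 * v a + W 1 1 * v b := by
  show ∑ k, TL a b W b k * v k = _
  rw [sum_pair_support hab _ (fun k hka hkb => by rw [TL_b_other hab hka hkb]; ring),
    TL_ba hab, TL_bb hab]

lemma TL_mulVec_other {a b x : ι} (hxa : x ≠ a) (hxb : x ≠ b)
    (W : Matrix (Fin 2) (Fin 2) ℂ) (v : ι → ℂ) : (TL a b W *ᵥ v) x = v x := by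
  show ∑ k, TL a b W x k * v k = _
  have h1 : ∀ k, TL a b W x k * v k = if x = k then v k else 0 := by
    intro k; rw [TL_other hxa hxb]; split <;> simp
  simp only [h1]
  rw [Finset.sum_ite_eq Finset.univ x v]
  simp

lemma clearCol (Adj : ι → ι → Prop) (hAdjne : ∀ x y, Adj x y → x ≠ y) (a : ι) :
    ∀ (l : List ι) (v : ι → ℂ), l ≠ [] → List.Chain' Adj (a :: l) →
    (∀ x, x ≠ a → x ∉ l → v x = 0) → (∑ x, star (v x) * v x) = 1 →
    ∃ G : List (ι × ι × Matrix (Fin 2) (Fin 2) ℂ),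
      G.length = l.length ∧
      (∀ t ∈ G, Adj t.1 t.2.1 ∧ t.1 ∈ a :: l ∧ t.2.1 ∈ a :: l ∧
        t.2.2 ∈ Matrix.unitaryGroup (Fin 2) ℂ) ∧
      (G.map (fun t => TL t.1 t.2.1 t.2.2)).prod *ᵥ v = Pi.single a 1 := by
  intro l
  induction l using List.reverseRecOn with
  | nil => intro v hne; exact absurd rfl hne
  | append_singleton l' c ih =>
    intro v _ hchain hsupp hnorm
    rcases eq_or_ne l' [] with rfl | hl'
    · -- single rotation on (a, c)
      simp only [List.nil_append] at hchain hsupp ⊢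
      have hadj : Adj a c := (List.isChain_cons_cons.mp hchain).1
      have hac : a ≠ c := hAdjne _ _ hadj
      obtain ⟨W, hWu, hW0, hW1⟩ := exists_rot (v a) (v c)
      have hsum : ∑ x, star (v x) * v x = star (v a) * v a + star (v c) * v c :=
        sum_pair_support hac _ (fun k hka hkc => by
          rw [hsupp k hka (by simp [hkc])]; ring)
      have h1 : W 0 0 * v a + W 0 1 * v c = 1 := hW1 (by rw [← hsum]; exact hnorm)
      refine ⟨[(a, c, W)], rfl, ?_, ?_⟩
      · intro t ht
        simp only [List.mem_singleton] at ht
        subst ht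
        exact ⟨hadj, by simp, by simp, hWu⟩
      · simp only [List.map_cons, List.map_nil, List.prod_cons, List.prod_nil, mul_one]
        funext x
        rcases eq_or_ne x a with rfl | hxa
        · rw [TL_mulVec_a hac, h1, Pi.single_eq_same]
        · rcases eq_or_ne x c with rfl | hxc
          · rw [TL_mulVec_b hac, hW0, Pi.single_eq_of_ne (hac.symm) 1]
          · rw [TL_mulVec_other hxa hxc, hsupp x hxa (by simp [hxc]),
              Pi.single_eq_of_ne hxa 1]
    · -- rotation on (prev, c), then recurse
      have hal' : (a :: l') ≠ [] := by simp
      set prev := (a :: l').getLast hal' with hprev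
      have hsplit : a :: (l' ++ [c]) = (a :: l') ++ [c] := by simp
      rw [hsplit] at hchain
      unfold List.Chain' at hchain
      rw [List.isChain_append] at hchain
      obtain ⟨hchain1, _, hjun⟩ := hchain
      have hadj : Adj prev c := by
        apply hjun prev _ c
        · simp
        · rw [List.getLast?_eq_getLast hal']; rfl
      have hpc : prev ≠ c := hAdjne _ _ hadj
      have hprevmem : prev ∈ a :: l' := List.getLast_mem hal'
      obtain ⟨W, hWu, hW0, _⟩ := exists_rot (v prev) (v c)
      set v₁ := TL prev c W *ᵥ v with hv₁
      have hv₁c : v₁ c = 0 := by rw [hv₁, TL_mulVec_b hpc, hW0]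
      have hv₁other : ∀ x, x ≠ prev → x ≠ c → v₁ x = v x := fun x hxp hxc =>
        TL_mulVec_other hxp hxc W v
      have hsupp₁ : ∀ x, x ≠ a → x ∉ l' → v₁ x = 0 := by
        intro x hxa hxl'
        rcases eq_or_ne x c with rfl | hxc
        · exact hv₁c
        · have hxp : x ≠ prev := by
            intro h; rw [h] at hxl' hxa
            rcases List.mem_cons.mp hprevmem with h' | h'
            · exact hxa h'
            · exact hxl' h'
          rw [hv₁other x hxp hxc]
          exact hsupp x hxa (by simp [hxl', hxc])
      have hnorm₁ : ∑ x, star (v₁ x) * v₁ x = 1 := by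
        rw [hv₁, unitary_norm_preserved (TL_mem_unitary hpc hWu) v]
        exact hnorm
      obtain ⟨G', hlen, hmem, hprod⟩ := ih v₁ hl' hchain1 hsupp₁ hnorm₁
      refine ⟨G' ++ [(prev, c, W)], by simp [hlen], ?_, ?_⟩
      · intro t ht
        rcases List.mem_append.mp ht with ht | ht
        · obtain ⟨h1, h2, h3, h4⟩ := hmem t ht
          refine ⟨h1, ?_, ?_, h4⟩
          · rcases List.mem_cons.mp h2 with h | h
            · simp [h]
            · simp [List.mem_append.mpr (Or.inl h)]
          · rcases List.mem_cons.mp h3 with h | h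
            · simp [h]
            · simp [List.mem_append.mpr (Or.inl h)]
        · simp only [List.mem_singleton] at ht
          subst ht
          refine ⟨hadj, ?_, by simp, hWu⟩
          rcases List.mem_cons.mp hprevmem with h | h
          · simp [h]
          · simp [List.mem_append.mpr (Or.inl h)]
      · rw [List.map_append, List.prod_append]
        simp only [List.map_cons, List.map_nil, List.prod_cons, List.prod_nil, mul_one]
        rw [← Matrix.mulVec_mulVec]
        exact hprod

end CC

section Main
variable {ι : Type*} [DecidableEq ι] [Fintype ι]

/-- `U` agrees with the identity outside the index set `s`. -/
def Supported (s : List ι) (U : Matrix ι ι ℂ) : Prop :=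
  ∀ x y, (x ∉ s ∨ y ∉ s) → U x y = if x = y then 1 else 0

lemma supported_TL_mul {s : List ι} {U : Matrix ι ι ℂ} (hU : Supported s U)
    {p q : ι} (hp : p ∈ s) (hq : q ∈ s) (hpq : p ≠ q) (W : Matrix (Fin 2) (Fin 2) ℂ) :
    Supported s (TL p q W * U) := by
  intro x y hxy
  rcases hxy with hx | hy
  · have hxp : x ≠ p := fun h => hx (h ▸ hp)
    have hxq : x ≠ q := fun h => hx (h ▸ hq)
    rw [Matrix.mul_apply]
    have h1 : ∀ k, TL p q W x k * U k y = if x = k then U k y else 0 := by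
      intro k; rw [TL_other hxp hxq]; split <;> simp
    simp only [h1]
    rw [Finset.sum_ite_eq Finset.univ x (fun k => U k y)]
    simp only [Finset.mem_univ, if_true]
    exact hU x y (Or.inl hx)
  · have hyp : y ≠ p := fun h => hy (h ▸ hp)
    have hyq : y ≠ q := fun h => hy (h ▸ hq)
    rw [Matrix.mul_apply]
    have h1 : ∀ k, TL p q W x k * U k y = if k = y then TL p q W x k else 0 := by
      intro k
      rw [hU k y (Or.inr hy)]
      split <;> simp
    simp only [h1]
    rw [Finset.sum_ite_eq' Finset.univ y (fun k => TL p q W x k)]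
    simp only [Finset.mem_univ, if_true]
    rcases eq_or_ne x p with hxp | hxp
    · rw [hxp, TL_a_other hyp hyq]
      simp [show ¬(p = y) from fun h => hyp h.symm]
    · rcases eq_or_ne x q with hxq | hxq
      · rw [hxq, TL_b_other hpq hyp hyq]
        simp [show ¬(q = y) from fun h => hyq h.symm]
      · rw [TL_other hxp hxq]

lemma supported_prodTL {s : List ι} {U : Matrix ι ι ℂ} (hU : Supported s U)
    (G : List (ι × ι × Matrix (Fin 2) (Fin 2) ℂ))
    (hG : ∀ t ∈ G, t.1 ∈ s ∧ t.2.1 ∈ s ∧ t.1 ≠ t.2.1) :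
    Supported s ((G.map (fun t => TL t.1 t.2.1 t.2.2)).prod * U) := by
  induction G with
  | nil => simpa using hU
  | cons t G' ih =>
    rw [List.map_cons, List.prod_cons, mul_assoc]
    obtain ⟨h1, h2, h3⟩ := hG t List.mem_cons_self
    exact supported_TL_mul (ih (fun t' ht' => hG t' (List.mem_cons_of_mem t ht'))) h1 h2 h3 _

lemma reverse_prod_inv {M α : Type*} [Monoid M] (f g : α → M) :
    ∀ l : List α, (∀ x ∈ l, f x * g x = 1) →
      ((l.map f).reverse.prod) * (l.map g).prod = 1 := by
  intro l
  induction l with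
  | nil => simp
  | cons x l' ih =>
    intro h
    rw [List.map_cons, List.map_cons, List.reverse_cons, List.prod_append,
      List.prod_cons, List.prod_cons, List.prod_nil, mul_one]
    have hx : f x * g x = 1 := h x List.mem_cons_self
    calc ((l'.map f).reverse.prod * f x) * (g x * (l'.map g).prod)
        = (l'.map f).reverse.prod * ((f x * g x) * (l'.map g).prod) := by
          rw [mul_assoc, ← mul_assoc (f x)]
      _ = 1 := by
          rw [hx, one_mul]
          exact ih (fun y hy => h y (List.mem_cons_of_mem x hy))

lemma TL_inj {a b : ι} (hab : a ≠ b) {M M' : Matrix (Fin 2) (Fin 2) ℂ}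
    (h : TL a b M = TL a b M') : M = M' := by
  ext p q
  fin_cases p <;> fin_cases q
  · have := congr_fun (congr_fun h a) a
    rwa [TL_aa, TL_aa] at this
  · have := congr_fun (congr_fun h a) b
    rwa [TL_ab hab, TL_ab hab] at this
  · have := congr_fun (congr_fun h b) a
    rwa [TL_ba hab, TL_ba hab] at this
  · have := congr_fun (congr_fun h b) b
    rwa [TL_bb hab, TL_bb hab] at this

lemma tri_step (k : ℕ) : k + k * (k - 1) / 2 = (k + 1) * k / 2 := by
  cases k with
  | zero => rfl
  | succ k =>
    have h1 : (k + 1 + 1) * (k + 1) = (k + 1) * k + 2 * (k + 1) := by ring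
    rw [h1, Nat.add_mul_div_left _ _ (by norm_num : 0 < 2)]
    simp only [Nat.add_sub_cancel]
    omega

lemma main_ind (Adj : ι → ι → Prop) (hAdjne : ∀ x y, Adj x y → x ≠ y)
    (P : Matrix ι ι ℂ → Prop)
    (hP : ∀ a b W, Adj a b → W ∈ Matrix.unitaryGroup (Fin 2) ℂ → P (TL a b W)) :
    ∀ (s : List ι), List.Chain' Adj s → 2 ≤ s.length →
    ∀ U, U ∈ Matrix.unitaryGroup ι ℂ → Supported s U →
    ∃ L : List (Matrix ι ι ℂ), L.length ≤ s.length * (s.length - 1) / 2 ∧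
      (∀ A ∈ L, P A) ∧ U = L.prod := by
  intro s
  induction s with
  | nil => intro _ h; simp at h
  | cons a l ihl =>
    intro hchain hlen U hU hsupp
    match l, hchain, hlen, hsupp, ihl with
    | [], _, hlen, _, _ => simp at hlen
    | [b], hchain, _, hsupp, _ =>
      -- base case : 2×2 block
      have hadj : Adj a b := (List.isChain_cons_cons.mp hchain).1
      have hab : a ≠ b := hAdjne _ _ hadj
      set W : Matrix (Fin 2) (Fin 2) ℂ := !![U a a, U a b; U b a, U b b] with hW
      have hW00 : W 0 0 = U a a := by simp [hW]
      have hW01 : W 0 1 = U a b := by simp [hW]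
      have hW10 : W 1 0 = U b a := by simp [hW]
      have hW11 : W 1 1 = U b b := by simp [hW]
      have hTL : U = TL a b W := by
        ext x y
        rcases eq_or_ne x a with hxa | hxa
        · rcases eq_or_ne y a with hya | hya
          · rw [hxa, hya, TL_aa, hW00]
          · rcases eq_or_ne y b with hyb | hyb
            · rw [hxa, hyb, TL_ab hab, hW01]
            · rw [hxa, TL_a_other hya hyb, hsupp a y (Or.inr (by simp [hya, hyb]))]
              simp [show ¬(a = y) from fun h => hya h.symm]
        · rcases eq_or_ne x b with hxb | hxb
          · rcases eq_or_ne y a with hya | hya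
            · rw [hxb, hya, TL_ba hab, hW10]
            · rcases eq_or_ne y b with hyb | hyb
              · rw [hxb, hyb, TL_bb hab, hW11]
              · rw [hxb, TL_b_other hab hya hyb, hsupp b y (Or.inr (by simp [hya, hyb]))]
                simp [show ¬(b = y) from fun h => hyb h.symm]
          · rw [TL_other hxa hxb, hsupp x y (Or.inl (by simp [hxa, hxb]))]
      have hWu : W ∈ Matrix.unitaryGroup (Fin 2) ℂ := by
        rw [Matrix.mem_unitaryGroup_iff]
        have h1 := Matrix.mem_unitaryGroup_iff.mp hU
        rw [hTL, TL_star hab, TL_mul hab, ← TL_one hab] at h1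
        exact TL_inj hab h1
      exact ⟨[TL a b W], by simp, fun A hA => by
        rw [List.mem_singleton] at hA; rw [hA]; exact hP a b W hadj hWu,
        by simp [hTL]⟩
    | b :: c :: l₃, hchain, _, hsupp, ihl =>
      set l := b :: c :: l₃ with hl
      have hl_ne : l ≠ [] := by simp [hl]
      have hchain_l : List.Chain' Adj l := hchain.tail
      set v : ι → ℂ := fun x => U x a with hv
      have hsupp_v : ∀ x, x ≠ a → x ∉ l → v x = 0 := by
        intro x hxa hxl
        rw [hv]
        have := hsupp x a (Or.inl (by simp [hxa, hxl]))
        simpa [hxa] using this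
      have hnorm : ∑ x, star (v x) * v x = 1 := by
        have h1 := congr_fun (congr_fun (Matrix.mem_unitaryGroup_iff'.mp hU) a) a
        rw [Matrix.mul_apply] at h1
        simp only [Matrix.star_apply, Matrix.one_apply_eq] at h1
        exact h1
      obtain ⟨G, hGlen, hGmem, hGprod⟩ :=
        clearCol Adj hAdjne a l v hl_ne hchain hsupp_v hnorm
      set R := (G.map (fun t => TL t.1 t.2.1 t.2.2)).prod with hR
      set U₁ := R * U with hU₁
      have hRu : R ∈ Matrix.unitaryGroup ι ℂ := by
        apply Submonoid.list_prod_mem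
        intro X hX
        rw [List.mem_map] at hX
        obtain ⟨t, ht, rfl⟩ := hX
        obtain ⟨h1, _, _, h4⟩ := hGmem t ht
        exact TL_mem_unitary (hAdjne _ _ h1) h4
      have hU₁u : U₁ ∈ Matrix.unitaryGroup ι ℂ := mul_mem hRu hU
      have hcol : ∀ x, U₁ x a = (Pi.single a (1:ℂ) : ι → ℂ) x := by
        intro x
        have hx := congr_fun hGprod x
        rw [← hx, hU₁, Matrix.mul_apply]
        rfl
      have hrow : ∀ y, U₁ a y = if a = y then 1 else 0 := by
        intro y
        have h2 := congr_fun (congr_fun (Matrix.mem_unitaryGroup_iff'.mp hU₁u) a) y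
        rw [Matrix.mul_apply] at h2
        simp only [Matrix.star_apply] at h2
        have h3 : ∀ k, star (U₁ k a) * U₁ k y = if k = a then U₁ k y else 0 := by
          intro k
          rw [hcol k]
          rcases eq_or_ne k a with hka | hka
          · rw [hka]; simp
          · rw [Pi.single_eq_of_ne hka]; simp [hka]
        rw [Finset.sum_congr rfl (fun k _ => h3 k),
          Finset.sum_ite_eq' Finset.univ a (fun k => U₁ k y)] at h2
        simp only [Finset.mem_univ, if_true] at h2
        rw [h2, Matrix.one_apply]
      have hsuppU₁s : Supported (a :: l) U₁ := by
        rw [hU₁, hR]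
        exact supported_prodTL hsupp G (fun t ht =>
          ⟨(hGmem t ht).2.1, (hGmem t ht).2.2.1, hAdjne _ _ (hGmem t ht).1⟩)
      have hsupp₁ : Supported l U₁ := by
        intro x y hxy
        rcases hxy with hx | hy
        · rcases eq_or_ne x a with hxa | hxa
          · rw [hxa]; exact hrow y
          · exact hsuppU₁s x y (Or.inl (by simp [hxa, hx]))
        · rcases eq_or_ne y a with hya | hya
          · rw [hya, hcol x, Pi.single_apply]
          · exact hsuppU₁s x y (Or.inr (by simp [hya, hy]))
      obtain ⟨L', hL'len, hL'P, hL'prod⟩ :=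
        ihl hchain_l (by simp [hl]) U₁ hU₁u hsupp₁
      have hinv : ((G.map (fun t => TL t.1 t.2.1 (star t.2.2))).reverse.prod) * R = 1 := by
        rw [hR]
        apply reverse_prod_inv (fun t => TL t.1 t.2.1 (star t.2.2))
          (fun t => TL t.1 t.2.1 t.2.2) G
        intro t ht
        obtain ⟨h1, _, _, h4⟩ := hGmem t ht
        have hne := hAdjne _ _ h1
        rw [TL_mul hne, Matrix.mem_unitaryGroup_iff'.mp h4, TL_one hne]
      refine ⟨(G.map (fun t => TL t.1 t.2.1 (star t.2.2))).reverse ++ L', ?_, ?_, ?_⟩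
      · rw [List.length_append, List.length_reverse, List.length_map, hGlen]
        have h5 : L'.length ≤ l.length * (l.length - 1) / 2 := hL'len
        have h6 := tri_step l.length
        have h7 : (a :: l).length = l.length + 1 := by simp
        rw [h7, Nat.add_sub_cancel]
        omega
      · intro A hA
        rcases List.mem_append.mp hA with hA | hA
        · rw [List.mem_reverse, List.mem_map] at hA
          obtain ⟨t, ht, rfl⟩ := hA
          obtain ⟨h1, _, _, h4⟩ := hGmem t ht
          exact hP _ _ _ h1 (Unitary.star_mem h4)
        · exact hL'P A hA
      · rw [List.prod_append, ← hL'prod, hU₁, ← mul_assoc, hinv, one_mul]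

end Main

section Gray

/-- Adjacency of bit-vectors: differ in exactly one position. -/
def AdjF {n : ℕ} (f g : Fin n → Fin 2) : Prop :=
  ∃ i, f i ≠ g i ∧ ∀ j, j ≠ i → f j = g j

lemma AdjF.symm {n : ℕ} {f g : Fin n → Fin 2} (h : AdjF f g) : AdjF g f := by
  obtain ⟨i, h1, h2⟩ := h
  exact ⟨i, h1.symm, fun j hj => (h2 j hj).symm⟩

/-- Prepend a low-order bit. -/
def consF {n : ℕ} (c : Fin 2) (f : Fin n → Fin 2) : Fin (n + 1) → Fin 2 := Fin.cons c f

lemma consF_zero {n : ℕ} (c : Fin 2) (f : Fin n → Fin 2) : consF c f 0 = c := rfl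
lemma consF_succ {n : ℕ} (c : Fin 2) (f : Fin n → Fin 2) (k : Fin n) :
    consF c f k.succ = f k := by simp [consF]

lemma consF_injective {n : ℕ} (c : Fin 2) : Function.Injective (consF (n := n) c) := by
  intro f g h
  funext k
  have := congr_fun h k.succ
  rwa [consF_succ, consF_succ] at this

lemma AdjF.cons {n : ℕ} (c : Fin 2) {f g : Fin n → Fin 2} (h : AdjF f g) :
    AdjF (consF c f) (consF c g) := by
  obtain ⟨i, h1, h2⟩ := h
  refine ⟨i.succ, by rwa [consF_succ, consF_succ], ?_⟩
  intro j hj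
  rcases Fin.eq_zero_or_eq_succ j with rfl | ⟨k, rfl⟩
  · rw [consF_zero, consF_zero]
  · have hk : k ≠ i := fun h' => hj (by rw [h'])
    rw [consF_succ, consF_succ, h2 k hk]

lemma AdjF_cons01 {n : ℕ} (f : Fin n → Fin 2) : AdjF (consF 0 f) (consF 1 f) := by
  refine ⟨0, by rw [consF_zero, consF_zero]; decide, ?_⟩
  intro j hj
  rcases Fin.eq_zero_or_eq_succ j with rfl | ⟨k, rfl⟩
  · exact absurd rfl hj
  · rw [consF_succ, consF_succ]

/-- The reflected binary Gray code on `n` bits. -/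
def grayVec : (n : ℕ) → List (Fin n → Fin 2)
  | 0 => [fun i => i.elim0]
  | n + 1 => (grayVec n).map (consF 0) ++ ((grayVec n).reverse.map (consF 1))

lemma grayVec_length (n : ℕ) : (grayVec n).length = 2 ^ n := by
  induction n with
  | zero => rfl
  | succ n ih => simp [grayVec, ih, pow_succ]; ring

lemma grayVec_ne_nil (n : ℕ) : grayVec n ≠ [] := by
  intro h
  have hl := grayVec_length n
  rw [h, List.length_nil] at hl
  exact absurd hl.symm (pow_ne_zero n two_ne_zero)

lemma grayVec_nodup (n : ℕ) : (grayVec n).Nodup := by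
  induction n with
  | zero => simp [grayVec]
  | succ n ih =>
    rw [grayVec, List.nodup_append]
    refine ⟨ih.map (consF_injective 0), ((List.nodup_reverse.mpr ih).map (consF_injective 1)), ?_⟩
    intro x hx y hy
    rw [List.mem_map] at hx hy
    obtain ⟨f, _, rfl⟩ := hx
    obtain ⟨g, _, rfl⟩ := hy
    intro hg
    have := congr_fun hg 0
    rw [consF_zero, consF_zero] at this
    exact absurd this (by decide)

lemma grayVec_chain (n : ℕ) : List.Chain' AdjF (grayVec n) := by
  induction n with
  | zero => exact List.isChain_singleton _
  | succ n ih =>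
    unfold List.Chain'
    rw [grayVec, List.isChain_append]
    refine ⟨?_, ?_, ?_⟩
    · rw [List.isChain_map]
      exact List.IsChain.imp (fun ⦃a b⦄ h => h.cons 0) ih
    · rw [List.isChain_map, List.isChain_reverse]
      exact List.IsChain.imp (fun ⦃a b⦄ h => (h.symm).cons 1) ih
    · intro x hx y hy
      rw [List.getLast?_map, List.getLast?_eq_getLast (grayVec_ne_nil n)] at hx
      rw [List.head?_map, List.head?_reverse,
        List.getLast?_eq_getLast (grayVec_ne_nil n)] at hy
      simp only [Option.map_some, Option.mem_def, Option.some.injEq] at hx hy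
      rw [← hx, ← hy]
      exact AdjF_cons01 _

end Gray
section Gate

lemma E00_apply (p q : Fin 2) : E00 p q = if p = 0 ∧ q = 0 then 1 else 0 := by
  fin_cases p <;> fin_cases q <;> simp [E00]

lemma E11_apply (p q : Fin 2) : E11 p q = if p = 1 ∧ q = 1 then 1 else 0 := by
  fin_cases p <;> fin_cases q <;> simp [E11]

lemma Ectrl_one (c : Fin 2) : (if c = 0 then E00 else E11) c c = 1 := by
  fin_cases c <;> simp [E00_apply, E11_apply]

lemma fin2_eq_of_ne {u v w : Fin 2} (h1 : u ≠ w) (h2 : v ≠ w) : u = v := by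
  revert h1 h2; revert u v w; decide

lemma fin2_eq_one {w : Fin 2} (h : w ≠ 0) : w = 1 := by
  revert h; revert w; decide

lemma Ectrl_zero {c u v : Fin 2} (h : u ≠ c ∨ v ≠ c) :
    (if c = 0 then E00 else E11) u v = 0 := by
  rcases eq_or_ne c 0 with hc | hc
  · rw [hc] at h
    rw [if_pos hc, E00_apply, if_neg (by tauto)]
  · have hc1 : c = 1 := fin2_eq_one hc
    rw [hc1] at h
    rw [if_neg hc, E11_apply, if_neg (by tauto)]

lemma TL_isControlledGate {n : ℕ} {a b : Fin (2 ^ n)}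
    (hab : AdjF (finFunctionFinEquiv.symm a) (finFunctionFinEquiv.symm b))
    {W : Matrix (Fin 2) (Fin 2) ℂ} (hW : W ∈ Matrix.unitaryGroup (Fin 2) ℂ) :
    IsControlledGate n (n - 1) (TL a b W) := by
  set d : Fin (2 ^ n) → Fin n → Fin 2 := fun x => finFunctionFinEquiv.symm x with hd
  obtain ⟨i, hi, hoff⟩ := hab
  have hdinj : Function.Injective d := finFunctionFinEquiv.symm.injective
  have hi' : d a i ≠ d b i := hi
  have hoff' : ∀ j, j ≠ i → d a j = d b j := hoff
  have hab' : a ≠ b := fun h => hi (by rw [h])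
  set σ : Equiv.Perm (Fin 2) := Equiv.swap 0 (d a i) with hσ
  have hσa : σ (d a i) = 0 := Equiv.swap_apply_right 0 (d a i)
  have hσb : σ (d b i) = 1 := by
    have key : ∀ u v : Fin 2, v ≠ u → Equiv.swap 0 u v = 1 := by decide
    exact key (d a i) (d b i) (Ne.symm hi)
  set W₂ : Matrix (Fin 2) (Fin 2) ℂ := W.submatrix σ σ with hW₂def
  have hW₂apply : ∀ p q, W₂ p q = W (σ p) (σ q) := fun p q => rfl
  have hW₂ : W₂ ∈ Matrix.unitaryGroup (Fin 2) ℂ := by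
    rw [Matrix.mem_unitaryGroup_iff']
    rw [hW₂def, Matrix.star_eq_conjTranspose, Matrix.conjTranspose_submatrix,
      Matrix.submatrix_mul_equiv, ← Matrix.star_eq_conjTranspose,
      Matrix.mem_unitaryGroup_iff'.mp hW, Matrix.submatrix_one_equiv]
  set V : Fin n → Matrix (Fin 2) (Fin 2) ℂ :=
    fun j => if j = i then W₂ - 1 else if d a j = 0 then E00 else E11 with hV
  have hVi : V i = W₂ - 1 := by simp [hV]
  have hVj : ∀ j, j ≠ i → V j = if d a j = 0 then E00 else E11 := by
    intro j hj; simp [hV, hj]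
  -- key facts about digit vectors
  have hFa : ∀ x : Fin (2 ^ n), d x = d a → x = a := fun x h => hdinj h
  have hF1 : ∀ x : Fin (2 ^ n), (∀ j, j ≠ i → d x j = d a j) → x = a ∨ x = b := by
    intro x hx
    by_cases hxi : d x i = d a i
    · left
      apply hFa
      funext j
      rcases eq_or_ne j i with rfl | hj
      · exact hxi
      · exact hx j hj
    · right
      apply hdinj
      funext j
      rcases eq_or_ne j i with rfl | hj
      · exact fin2_eq_of_ne hxi (Ne.symm hi')
      · rw [hx j hj, hoff' j hj]
    -- end hF1
  have hxa_digits : ∀ j, j ≠ i → d a j = d a j := fun _ _ => rfl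
  have hxb_digits : ∀ j, j ≠ i → d b j = d a j := fun j hj => (hoff' j hj).symm
  have hkron : ∀ x y, kronPow n V x y = ∏ j, V j (d x j) (d y j) := fun x y => rfl
  have hprod_good : ∀ x y : Fin (2 ^ n), (∀ j, j ≠ i → d x j = d a j) →
      (∀ j, j ≠ i → d y j = d a j) →
      kronPow n V x y = (W₂ - 1) (d x i) (d y i) := by
    intro x y hx hy
    rw [hkron, ← Finset.mul_prod_erase Finset.univ _ (Finset.mem_univ i), hVi]
    have h1 : ∀ j ∈ Finset.univ.erase i, V j (d x j) (d y j) = 1 := by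
      intro j hj
      have hji : j ≠ i := (Finset.mem_erase.mp hj).1
      rw [hVj j hji, hx j hji, hy j hji]
      exact Ectrl_one (d a j)
    rw [Finset.prod_congr rfl h1, Finset.prod_const_one, mul_one]
  have hprod_bad : ∀ x y : Fin (2 ^ n),
      (∃ j, j ≠ i ∧ (d x j ≠ d a j ∨ d y j ≠ d a j)) → kronPow n V x y = 0 := by
    intro x y ⟨j, hji, hj⟩
    rw [hkron]
    apply Finset.prod_eq_zero (Finset.mem_univ j)
    rw [hVj j hji]
    exact Ectrl_zero hj
  refine ⟨V, i, W₂, hW₂, hVi, ?_, ?_, ?_⟩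
  · intro j hj
    rw [hVj j hj]
    split
    · exact Or.inl rfl
    · exact Or.inr (Or.inl rfl)
  · have hset : {j : Fin n | j ≠ i ∧ (V j = E00 ∨ V j = E11)}
        = ↑(({i}ᶜ : Finset (Fin n))) := by
      ext j
      simp only [Set.mem_setOf_eq, Finset.coe_compl, Finset.coe_singleton,
        Set.mem_compl_iff, Set.mem_singleton_iff]
      constructor
      · exact fun h => h.1
      · intro hj
        refine ⟨hj, ?_⟩
        rw [hVj j hj]
        split
        · exact Or.inl rfl
        · exact Or.inr rfl
    rw [hset, Set.ncard_coe_finset, Finset.card_compl, Finset.card_singleton,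
      Fintype.card_fin]
  · ext x y
    rw [Matrix.add_apply, Matrix.one_apply]
    by_cases hx : ∀ j, j ≠ i → d x j = d a j
    · by_cases hy : ∀ j, j ≠ i → d y j = d a j
      · rw [hprod_good x y hx hy, Matrix.sub_apply, Matrix.one_apply]
        rcases hF1 x hx with hxa | hxb
        · rcases hF1 y hy with hya | hyb
          · rw [hxa, hya, TL_aa]
            simp only [if_pos rfl]
            rw [hW₂apply, hσa]
            ring
          · rw [hxa, hyb, TL_ab hab']
            rw [if_neg hab', if_neg hi', hW₂apply, hσa, hσb]
            ring
        · rcases hF1 y hy with hya | hyb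
          · rw [hxb, hya, TL_ba hab']
            rw [if_neg (Ne.symm hab'), if_neg (Ne.symm hi'), hW₂apply, hσa, hσb]
            ring
          · rw [hxb, hyb, TL_bb hab']
            simp only [if_pos rfl]
            rw [hW₂apply, hσb]
            ring
      · -- y is outside {a, b}
        push_neg at hy
        obtain ⟨j, hji, hjy⟩ := hy
        rw [hprod_bad x y ⟨j, hji, Or.inr hjy⟩, add_zero]
        have hya : y ≠ a := fun h => hjy (by rw [h])
        have hyb : y ≠ b := fun h => hjy (by rw [h]; exact hxb_digits j hji)
        rcases hF1 x hx with hxa | hxb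
        · rw [hxa, TL_a_other hya hyb, if_neg (show ¬a = y from fun h => hya h.symm)]
        · rw [hxb, TL_b_other hab' hya hyb, if_neg (show ¬b = y from fun h => hyb h.symm)]
    · push_neg at hx
      obtain ⟨j, hji, hjx⟩ := hx
      rw [hprod_bad x y ⟨j, hji, Or.inl hjx⟩, add_zero]
      have hxa : x ≠ a := fun h => hjx (by rw [h])
      have hxb : x ≠ b := fun h => hjx (by rw [h]; exact hxb_digits j hji)
      rw [TL_other hxa hxb]

end Gate

/-- Every `n`-qubit unitary gate is a product of at most `2^{n-1}(2^n - 1)`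
controlled single-qubit gates, each with at most `n - 1` controls. -/
theorem unitary_decomposition (n : ℕ) (hn : 1 ≤ n)
    (U : Matrix (Fin (2 ^ n)) (Fin (2 ^ n)) ℂ)
    (hU : U ∈ Matrix.unitaryGroup (Fin (2 ^ n)) ℂ) :
    ∃ (r : ℕ) (L : List (Matrix (Fin (2 ^ n)) (Fin (2 ^ n)) ℂ)),
      r ≤ 2 ^ (n - 1) * (2 ^ n - 1) ∧ L.length = r ∧
      (∀ A ∈ L, ∃ k ≤ n - 1, IsControlledGate n k A) ∧
      U = L.prod := by
  classical
  set AdjI : Fin (2 ^ n) → Fin (2 ^ n) → Prop :=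
    fun a b => AdjF (finFunctionFinEquiv.symm a) (finFunctionFinEquiv.symm b) with hAdjI
  have hAdjne : ∀ x y, AdjI x y → x ≠ y := by
    intro x y ⟨i, hi, _⟩ h
    exact hi (by rw [h])
  set s : List (Fin (2 ^ n)) := (grayVec n).map (fun f => finFunctionFinEquiv f) with hs
  have hs_len : s.length = 2 ^ n := by rw [hs, List.length_map, grayVec_length]
  have hs_nodup : s.Nodup := (grayVec_nodup n).map finFunctionFinEquiv.injective
  have hs_chain : List.Chain' AdjI s := by
    unfold List.Chain'
    rw [hs, List.isChain_map]
    apply List.IsChain.imp _ (grayVec_chain n)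
    intro f g h
    rw [hAdjI]
    simpa [Equiv.symm_apply_apply] using h
  have hs_mem : ∀ x : Fin (2 ^ n), x ∈ s := by
    have hcard : s.toFinset.card = Fintype.card (Fin (2 ^ n)) := by
      rw [List.toFinset_card_of_nodup hs_nodup, hs_len, Fintype.card_fin]
    have huniv : s.toFinset = Finset.univ := Finset.eq_univ_of_card _ hcard
    intro x
    rw [← List.mem_toFinset, huniv]
    exact Finset.mem_univ x
  have hsupp : Supported s U := by
    intro x y h
    rcases h with h | h
    · exact absurd (hs_mem x) h
    · exact absurd (hs_mem y) h
  have hlen2 : 2 ≤ s.length := by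
    rw [hs_len]
    calc 2 = 2 ^ 1 := rfl
    _ ≤ 2 ^ n := Nat.pow_le_pow_right (by norm_num) hn
  obtain ⟨L, hLlen, hLP, hLprod⟩ :=
    main_ind AdjI hAdjne (fun A => ∃ k ≤ n - 1, IsControlledGate n k A)
      (fun a b W hadj hWu => ⟨n - 1, le_refl _, TL_isControlledGate hadj hWu⟩)
      s hs_chain hlen2 U hU hsupp
  refine ⟨L.length, L, ?_, rfl, hLP, hLprod⟩
  have hb : s.length * (s.length - 1) / 2 = 2 ^ (n - 1) * (2 ^ n - 1) := by
    rw [hs_len]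
    have h2 : 2 ^ n = 2 * 2 ^ (n - 1) := by
      rw [← pow_succ']
      congr 1
      omega
    calc 2 ^ n * (2 ^ n - 1) / 2 = 2 * (2 ^ (n - 1) * (2 ^ n - 1)) / 2 := by
          rw [h2, mul_assoc]
    _ = 2 ^ (n - 1) * (2 ^ n - 1) := Nat.mul_div_cancel_left _ (by norm_num)
  rw [← hb]
  exact hLlen
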